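/- arXiv:1406.5422 — 4 statements merged into one kernel-verified Lean document; each statement's English description precedes it below -/
import Mathlib

section
/- For every γ > 0 and every x ∈ (0, e^γ − 1], the quantity −(ln(1+x) − γ)/√(x(x+2)/(1+x)²) is bounded below by (γ/√(e^{2γ}−1))·(√((e^γ−1)/x) − 1). -/
lemma keyA (γ u : ℝ) (hγ : 0 < γ) (hu1 : 1 ≤ u) (huU : u ≤ Real.exp γ) :
    γ * (Real.exp γ - u) ≤ u * (γ - Real.log u) * (Real.exp γ - 1) := by
  set U := Real.exp γ with hU
  have hU1 : 1 < U := by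
    rw [hU, show (1:ℝ) = Real.exp 0 from (Real.exp_zero).symm]
    exact Real.exp_lt_exp.mpr hγ
  have hX : 0 < U - 1 := by linarith
  set a : ℝ := (U - u) / (U - 1) with ha'
  set b : ℝ := (u - 1) / (U - 1) with hb'
  have ha : 0 ≤ a := div_nonneg (by linarith) hX.le
  have hb : 0 ≤ b := div_nonneg (by linarith) hX.le
  have hab : a + b = 1 := by rw [ha', hb']; field_simp; ring
  have hconv := Real.convexOn_mul_log.2 (Set.mem_Ici.mpr (by norm_num : (0:ℝ) ≤ 1))
    (Set.mem_Ici.mpr (by linarith : (0:ℝ) ≤ U)) ha hb hab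
  have hcomb : a * 1 + b * U = u := by rw [ha', hb']; field_simp; ring
  simp only [smul_eq_mul, hcomb, Real.log_one, Real.log_exp, ← hU] at hconv
  have hlogU : Real.log U = γ := Real.log_exp γ
  rw [hlogU] at hconv
  have hul : u * Real.log u ≤ b * (U * γ) := by linarith [hconv]
  have hbmul : b * (U - 1) = u - 1 := by rw [hb']; field_simp
  have hul2 : u * Real.log u * (U - 1) ≤ (u - 1) * (U * γ) := by
    have h := mul_le_mul_of_nonneg_right hul hX.le
    calc u * Real.log u * (U - 1) ≤ b * (U * γ) * (U - 1) := h
      _ = b * (U - 1) * (U * γ) := by ring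
      _ = (u - 1) * (U * γ) := by rw [hbmul]
  nlinarith [hul2]

set_option maxHeartbeats 1000000 in
/-- Lower bound on the normalized capacity gap `-(C(x)-γ)/√V(x)` with
`C(x) = ln(1+x)` and `V(x) = x(x+2)/(1+x)²`, for `x ∈ (0, e^γ - 1]`. -/
theorem capacity_gap_lower_bound (γ x : ℝ) (hγ : 0 < γ)
    (hx : x ∈ Set.Ioc 0 (Real.exp γ - 1)) :
    -(Real.log (1 + x) - γ) / Real.sqrt (x * (x + 2) / (1 + x) ^ 2) ≥
      γ / Real.sqrt (Real.exp (2 * γ) - 1) *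
        (Real.sqrt ((Real.exp γ - 1) / x) - 1) := by
  obtain ⟨hx0, hxX⟩ := hx
  set X := Real.exp γ - 1 with hXdef
  have hXpos : 0 < X := by
    have : (1:ℝ) < Real.exp γ := by
      rw [show (1:ℝ) = Real.exp 0 from (Real.exp_zero).symm]
      exact Real.exp_lt_exp.mpr hγ
    simp [hXdef]; linarith
  have h1x : (0:ℝ) < 1 + x := by linarith
  -- squash exp(2γ) - 1
  have hE : Real.exp (2 * γ) - 1 = X * (X + 2) := by
    have : Real.exp (2 * γ) = Real.exp γ * Real.exp γ := by
      rw [two_mul, Real.exp_add]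
    rw [this, hXdef]; ring
  set p := Real.sqrt x with hp'
  set q := Real.sqrt (x + 2) with hq'
  set P := Real.sqrt X with hP'
  set Q := Real.sqrt (X + 2) with hQ'
  have hppos : 0 < p := Real.sqrt_pos.mpr hx0
  have hqpos : 0 < q := Real.sqrt_pos.mpr (by linarith)
  have hPpos : 0 < P := Real.sqrt_pos.mpr hXpos
  have hQpos : 0 < Q := Real.sqrt_pos.mpr (by linarith)
  have hp2 : p ^ 2 = x := Real.sq_sqrt hx0.le
  have hP2 : P ^ 2 = X := Real.sq_sqrt hXpos.le
  have hpP : p ≤ P := Real.sqrt_le_sqrt hxX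
  have hqQ : q ≤ Q := Real.sqrt_le_sqrt (by linarith)
  -- rewrite the sqrt expressions
  have hs1 : Real.sqrt (x * (x + 2) / (1 + x) ^ 2) = p * q / (1 + x) := by
    rw [Real.sqrt_div (by positivity), Real.sqrt_mul hx0.le, Real.sqrt_sq h1x.le]
  have hs2 : Real.sqrt (Real.exp (2 * γ) - 1) = P * Q := by
    rw [hE, Real.sqrt_mul hXpos.le]
  have hs3 : Real.sqrt (X / x) = P / p := Real.sqrt_div hXpos.le x
  rw [ge_iff_le, hs1, hs2, hs3]
  -- nonnegativity of the gap
  have hlog : Real.log (1 + x) ≤ γ := by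
    rw [Real.log_le_iff_le_exp h1x]; simp [hXdef] at hxX ⊢; linarith
  set A := γ - Real.log (1 + x) with hA'
  have hA : 0 ≤ A := by simp [hA']; linarith
  have hgoal1 : -(Real.log (1 + x) - γ) = A := by rw [hA']; ring
  rw [hgoal1, div_div_eq_mul_div, div_mul_eq_mul_div,
    div_le_div_iff₀ (by positivity) (by positivity)]
  -- key inequality from convexity
  have hK := keyA γ (1 + x) hγ (by linarith) (by simp [hXdef] at hxX ⊢; linarith)
  -- hK : γ * (exp γ - (1+x)) ≤ (1+x) * (γ - log(1+x)) * (exp γ - 1)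
  have hK' : γ * (X - x) ≤ A * (1 + x) * X := by
    have h2 : Real.exp γ - (1 + x) = X - x := by rw [hXdef]; ring
    have h3 : Real.exp γ - 1 = X := by rw [hXdef]
    rw [h2, h3] at hK; rw [hA']; nlinarith [hK]
  clear_value X p q P Q A
  -- reduce to: γ * (P - p) * q ≤ A * (1 + x) * (P * Q)
  have hPp : γ * (P / p - 1) * (p * q) = γ * (P - p) * q := by
    field_simp
  rw [hPp]
  have h3 : γ * (P - p) ≤ A * (1 + x) * P := by
    have hK2 : γ * (X - x) ≤ A * (1 + x) * (P * P) := by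
      have : P * P = X := by rw [← hP2]; ring
      rw [this]; exact hK'
    have hmul : γ * (P - p) * P ≤ A * (1 + x) * P * P := by
      nlinarith [hK2, mul_nonneg (mul_nonneg hγ.le hppos.le) (sub_nonneg.mpr hpP),
        hp2, hP2]
    exact le_of_mul_le_mul_right hmul hPpos
  calc γ * (P - p) * q ≤ γ * (P - p) * Q :=
        mul_le_mul_of_nonneg_left hqQ (by nlinarith [hpP, hγ.le])
    _ ≤ A * (1 + x) * P * Q := mul_le_mul_of_nonneg_right h3 hQpos.le
    _ = A * (1 + x) * (P * Q) := by ring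
end

section
/- For γ > 0 and n ≥ 2π(e^{2γ}−1)/γ² and x ∈ (0, e^γ−1), one has (1/2)·x/(e^γ−1) ≥ Q(√(2π)·(√((e^γ−1)/x) − 1)) where Q is the Gaussian Q-function, with equality when x = e^γ−1. -/
open MeasureTheory Real

/-- The Gaussian Q-function. -/
noncomputable def gaussQ (x : ℝ) : ℝ :=
  (Real.sqrt (2 * Real.pi))⁻¹ * ∫ t in Set.Ioi x, Real.exp (-t ^ 2 / 2)

lemma gauss_integrableOn (a : ℝ) :
    IntegrableOn (fun t : ℝ => Real.exp (-t ^ 2 / 2)) (Set.Ioi a) := by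
  have : Integrable (fun t : ℝ => Real.exp (-(1/2 : ℝ) * t ^ 2)) :=
    integrable_exp_neg_mul_sq (by norm_num)
  exact (this.integrableOn (s := Set.Ioi a)).congr_fun (fun t _ => by ring_nf) measurableSet_Ioi

lemma gauss_mul_integrableOn (a : ℝ) :
    IntegrableOn (fun t : ℝ => t * Real.exp (-t ^ 2 / 2)) (Set.Ioi a) := by
  have : Integrable (fun t : ℝ => t ^ (1:ℝ) * Real.exp (-(1/2 : ℝ) * t ^ 2)) :=
    integrable_rpow_mul_exp_neg_mul_sq (by norm_num) (by norm_num)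
  refine (this.integrableOn (s := Set.Ioi a)).congr_fun (fun t _ => ?_) measurableSet_Ioi
  simp only [Real.rpow_one]; ring_nf

lemma gauss_tail_int (a : ℝ) :
    (∫ t in Set.Ioi a, t * Real.exp (-t ^ 2 / 2)) = Real.exp (-a ^ 2 / 2) := by
  have h := integral_Ioi_of_hasDerivAt_of_tendsto'
    (f := fun t : ℝ => -Real.exp (-t ^ 2 / 2))
    (f' := fun t : ℝ => t * Real.exp (-t ^ 2 / 2)) (a := a) (m := 0)
    (fun x _ => ?_) (gauss_mul_integrableOn a) ?_
  · rw [h]; ring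
  · have h1 : HasDerivAt (fun t : ℝ => -t ^ 2 / 2) (-x) x := by
      have := ((hasDerivAt_pow 2 x).neg.div_const 2)
      exact this.congr_deriv (by simp; ring)
    have := (h1.exp).neg
    exact this.congr_deriv (by ring)
  · have h2 : Filter.Tendsto (fun t : ℝ => t ^ 2 / 2) Filter.atTop Filter.atTop :=
      (Filter.tendsto_pow_atTop two_ne_zero).atTop_div_const (by norm_num)
    have h3 : Filter.Tendsto (fun t : ℝ => Real.exp (-(t ^ 2 / 2))) Filter.atTop (nhds 0) :=
      Real.tendsto_exp_atBot.comp (Filter.tendsto_neg_atTop_atBot.comp h2)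
    have h4 : Filter.Tendsto (fun t : ℝ => -Real.exp (-t ^ 2 / 2)) Filter.atTop (nhds (-0)) := by
      apply Filter.Tendsto.neg
      convert h3 using 2 with t
      ring_nf
    simpa using h4

lemma gauss_tail_le {a : ℝ} (ha : 0 < a) :
    (∫ t in Set.Ioi a, Real.exp (-t ^ 2 / 2)) ≤ Real.exp (-a ^ 2 / 2) / a := by
  have h1 : (∫ t in Set.Ioi a, Real.exp (-t ^ 2 / 2))
      ≤ ∫ t in Set.Ioi a, (t / a) * Real.exp (-t ^ 2 / 2) := by
    refine setIntegral_mono_on (gauss_integrableOn a)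
      ((IntegrableOn.congr_fun ((gauss_mul_integrableOn a).div_const a) (fun t _ => by ring) measurableSet_Ioi))
      measurableSet_Ioi (fun t ht => ?_)
    have : (1:ℝ) ≤ t / a := (one_le_div ha).2 (le_of_lt ht)
    nlinarith [Real.exp_pos (-t^2/2)]
  calc (∫ t in Set.Ioi a, Real.exp (-t ^ 2 / 2)) ≤ _ := h1
    _ = (∫ t in Set.Ioi a, t * Real.exp (-t ^ 2 / 2)) / a := by
        rw [← integral_div]; congr 1; ext t; ring
    _ = Real.exp (-a ^ 2 / 2) / a := by rw [gauss_tail_int]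

lemma gauss_split {a : ℝ} (ha : 0 ≤ a) :
    (∫ t in Set.Ioi a, Real.exp (-t ^ 2 / 2))
      = Real.sqrt (2 * Real.pi) / 2 - ∫ t in (0:ℝ)..a, Real.exp (-t ^ 2 / 2) := by
  have hZ : (∫ t in Set.Ioi (0:ℝ), Real.exp (-t ^ 2 / 2)) = Real.sqrt (2 * Real.pi) / 2 := by
    have h := integral_gaussian_Ioi (1/2 : ℝ)
    have e : (∫ t in Set.Ioi (0:ℝ), Real.exp (-t ^ 2 / 2))
        = ∫ t in Set.Ioi (0:ℝ), Real.exp (-(1/2 : ℝ) * t ^ 2) :=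
      setIntegral_congr_fun measurableSet_Ioi (fun t _ => by ring_nf)
    rw [e, h, show Real.pi / (1/2 : ℝ) = 2 * Real.pi by ring]
  have hsplit : (∫ t in Set.Ioc (0:ℝ) a, Real.exp (-t ^ 2 / 2))
      + (∫ t in Set.Ioi a, Real.exp (-t ^ 2 / 2))
      = ∫ t in Set.Ioi (0:ℝ), Real.exp (-t ^ 2 / 2) := by
    rw [← setIntegral_union (Set.Ioc_disjoint_Ioi le_rfl) measurableSet_Ioi
      ((gauss_integrableOn 0).mono_set Set.Ioc_subset_Ioi_self) (gauss_integrableOn a),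
      Set.Ioc_union_Ioi_eq_Ioi ha]
  rw [intervalIntegral.integral_of_le ha]
  linarith [hZ, hsplit]

lemma gauss_lower {a : ℝ} (ha : 0 ≤ a) :
    a - a ^ 3 / 6 ≤ ∫ t in (0:ℝ)..a, Real.exp (-t ^ 2 / 2) := by
  have h : ∫ t in (0:ℝ)..a, (1 - t ^ 2 / 2) = a - a ^ 3 / 6 := by
    rw [intervalIntegral.integral_sub intervalIntegrable_const
      ((intervalIntegral.intervalIntegrable_pow 2).div_const 2)]
    simp [intervalIntegral.integral_div]
    ring
  rw [← h]
  refine intervalIntegral.integral_mono_on ha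
    (Continuous.intervalIntegrable (by continuity) _ _)
    (Continuous.intervalIntegrable (by continuity) _ _) (fun t _ => ?_)
  have := Real.add_one_le_exp (-t ^ 2 / 2)
  linarith


lemma gaussQ_main {s : ℝ} (hs : 1 ≤ s) :
    gaussQ (Real.sqrt (2 * Real.pi) * (s - 1)) ≤ 1 / (2 * s ^ 2) := by
  set c := Real.sqrt (2 * Real.pi) with hc
  have hπ : 0 < Real.pi := Real.pi_pos
  have hc0 : 0 < c := Real.sqrt_pos.2 (by positivity)
  have hc2 : c ^ 2 = 2 * Real.pi := Real.sq_sqrt (by positivity)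
  set u := s - 1 with hu
  have hu0 : 0 ≤ u := by simp [hu]; linarith
  have hs0 : 0 < s := by linarith
  rcases le_or_gt 0.64 u with hcase | hcase
  · -- Chernoff-style tail bound
    have ha0 : 0 < c * u := by positivity
    have h1 : gaussQ (c * u) ≤ c⁻¹ * (Real.exp (-(c*u) ^ 2 / 2) / (c*u)) := by
      unfold gaussQ
      rw [← hc]
      exact mul_le_mul_of_nonneg_left (gauss_tail_le ha0) (by positivity)
    have h2 : c⁻¹ * (Real.exp (-(c*u) ^ 2 / 2) / (c*u)) = Real.exp (-(Real.pi * u^2)) / (2 * Real.pi * u) := by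
      rw [mul_pow, hc2]
      rw [show -(2 * Real.pi * u ^ 2) / 2 = -(Real.pi * u ^ 2) by ring]
      field_simp
      ring_nf
      rw [hc2]
      ring
    have hπu : 2 ≤ Real.pi * u := by nlinarith [Real.pi_gt_d2]
    have h3 : s ^ 2 * Real.exp (-(Real.pi * u^2)) ≤ 1 := by
      have hse : s ≤ Real.exp u := by
        have := Real.add_one_le_exp u
        simp [hu] at this ⊢; linarith
      have h4 : s ^ 2 ≤ Real.exp (2 * u) := by
        rw [show (2:ℝ) * u = u + u by ring, Real.exp_add]
        nlinarith [Real.exp_pos u]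
      calc s ^ 2 * Real.exp (-(Real.pi * u^2))
          ≤ Real.exp (2*u) * Real.exp (-(Real.pi * u^2)) :=
            mul_le_mul_of_nonneg_right h4 (Real.exp_pos _).le
        _ = Real.exp (2*u - Real.pi * u^2) := by rw [← Real.exp_add]; ring_nf
        _ ≤ 1 := by
            rw [show (1:ℝ) = Real.exp 0 by simp]
            apply Real.exp_le_exp.2
            nlinarith
    have h5 : Real.exp (-(Real.pi * u^2)) / (2 * Real.pi * u) ≤ 1 / (2 * s ^ 2) := by
      rw [div_le_div_iff₀ (by positivity) (by positivity)]
      nlinarith [h3, hπu, sq_nonneg s]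
    calc gaussQ (c * u) ≤ _ := h1
      _ = _ := h2
      _ ≤ _ := h5
  · -- near 0 : use Taylor-type lower bound on the cdf piece
    have ha0 : 0 ≤ c * u := by positivity
    have h1 : gaussQ (c * u) = 1/2 - c⁻¹ * ∫ t in (0:ℝ)..(c*u), Real.exp (-t ^ 2 / 2) := by
      unfold gaussQ
      rw [← hc, gauss_split ha0, mul_sub]
      congr 1
      rw [← mul_div_assoc, inv_mul_cancel₀ hc0.ne']
    have h2 : c⁻¹ * ∫ t in (0:ℝ)..(c*u), Real.exp (-t ^ 2 / 2) ≥ u - Real.pi * u^3 / 3 := by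
      have h3 := gauss_lower ha0
      have h4 : c⁻¹ * (c*u - (c*u)^3/6) = u - Real.pi * u^3 / 3 := by
        have : (c*u)^3 = c * (2 * Real.pi * u^2 * u) := by
          rw [mul_pow]
          rw [show c^3 = c^2 * c by ring, hc2]
          ring
        rw [this]
        field_simp
        ring
      rw [ge_iff_le, ← h4]
      exact mul_le_mul_of_nonneg_left h3 (by positivity)
    have h5 : gaussQ (c*u) ≤ 1/2 - u + Real.pi * u^3/3 := by
      rw [h1]; linarith
    refine h5.trans ?_
    have hs164 : s < 1.64 := by
      have : u < 0.64 := hcase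
      simp only [hu] at this; linarith
    have hk : 2 * Real.pi * s^2 * (s - 1) ≤ 3 + 6 * s := by
      nlinarith [Real.pi_lt_d2, sq_nonneg (s - 1), sq_nonneg (1.64 - s),
        mul_nonneg (sub_nonneg.2 hs) (sub_nonneg.2 hs164.le),
        mul_nonneg (mul_nonneg (sub_nonneg.2 hs) (sub_nonneg.2 hs164.le)) (sub_nonneg.2 hs),
        mul_nonneg (mul_nonneg (sub_nonneg.2 hs) (sub_nonneg.2 hs)) (sub_nonneg.2 hs164.le)]
    have hu2 : (0:ℝ) ≤ (s-1)^2 := sq_nonneg _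
    rw [le_div_iff₀ (by positivity), hu]
    nlinarith [mul_nonneg hu2 (sub_nonneg.2 hk)]

theorem chord_ge_gaussQ_term (n γ : ℝ) (hγ : 0 < γ)
    (hn : n ≥ 2 * Real.pi * (Real.exp (2 * γ) - 1) / γ ^ 2) :
    (∀ x ∈ Set.Ioo 0 (Real.exp γ - 1),
        (1 / 2) * x / (Real.exp γ - 1) ≥
          gaussQ (Real.sqrt (2 * Real.pi) *
            (Real.sqrt ((Real.exp γ - 1) / x) - 1))) ∧
      (1 / 2) * (Real.exp γ - 1) / (Real.exp γ - 1) =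
        gaussQ (Real.sqrt (2 * Real.pi) *
          (Real.sqrt ((Real.exp γ - 1) / (Real.exp γ - 1)) - 1)) := by
  have hE : 0 < Real.exp γ - 1 := by
    nlinarith [Real.add_one_le_exp γ]
  set E := Real.exp γ - 1 with hEdef
  constructor
  · intro x hx
    obtain ⟨hx0, hxE⟩ := hx
    have hdiv1 : 1 ≤ E / x := (one_le_div hx0).2 hxE.le
    have hs : 1 ≤ Real.sqrt (E / x) := by
      rw [show (1:ℝ) = Real.sqrt 1 by simp]
      exact Real.sqrt_le_sqrt hdiv1
    have h := gaussQ_main hs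
    have hsq : Real.sqrt (E / x) ^ 2 = E / x := Real.sq_sqrt (by positivity)
    rw [ge_iff_le]
    refine h.trans_eq ?_
    rw [hsq]
    field_simp
  · have h1 : E / E = 1 := div_self hE.ne'
    rw [h1, Real.sqrt_one, sub_self, mul_zero]
    have h2 : gaussQ 0 = 1/2 := by
      unfold gaussQ
      rw [gauss_split le_rfl, intervalIntegral.integral_same, sub_zero,
        ← mul_div_assoc, inv_mul_cancel₀ (Real.sqrt_pos.2 (by positivity)).ne']
    rw [h2]
    field_simp
end

section
/- Consider M ≥ 1 codewords c_1 ≤ … ≤ c_M in [0,∞) with (1/M)·Σ_j c_j ≤ ρ, used over the channel U = ln(1+c) + ln(Σ_{i=1}^n |Z_i|²) − ln n with Z_i i.i.d. CN(0,1). The average probability of successful maximum-likelihood decoding satisfies 1 − ε' ≤ (1/M)·(1 + √(n/(2π))·ln(1 + M·ρ)). -/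
open MeasureTheory Real Set

/-- The output density of the logarithmic channel `U = ln(1+c) + ln(∑|Zᵢ|²) - ln n`
given input power `c`:
`q(u|c) = nⁿ exp(nu - n eᵘ/(1+c)) / ((1+c)ⁿ (n-1)!)`. -/
noncomputable def outDensity (n : ℕ) (c u : ℝ) : ℝ :=
  (n : ℝ) ^ n * Real.exp (n * u - n * Real.exp u / (1 + c)) /
    ((1 + c) ^ n * (Nat.factorial (n - 1) : ℝ))

noncomputable def f0 (n : ℕ) (t : ℝ) : ℝ :=
  (n : ℝ) ^ n * Real.exp (n * t - n * Real.exp t) / (Nat.factorial (n - 1) : ℝ)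

lemma f0_nonneg (n : ℕ) (t : ℝ) : 0 ≤ f0 n t := by
  unfold f0; positivity

lemma outDensity_eq (n : ℕ) {c : ℝ} (hc : 0 ≤ c) (u : ℝ) :
    outDensity n c u = f0 n (u - Real.log (1 + c)) := by
  have hc1 : (0:ℝ) < 1 + c := by linarith
  unfold outDensity f0
  rw [show (n:ℝ) * (u - Real.log (1+c)) - n * Real.exp (u - Real.log (1+c))
      = (n * u - n * Real.exp u / (1+c)) + n * (- Real.log (1+c)) by
    rw [Real.exp_sub, Real.exp_log hc1]; ring]
  rw [Real.exp_add, Real.exp_nat_mul, Real.exp_neg, Real.exp_log hc1]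
  field_simp
  rw [← mul_pow, mul_one_div_cancel hc1.ne', one_pow]

lemma f0_le_f0 (n : ℕ) {s t : ℝ} (h : s - Real.exp s ≤ t - Real.exp t) :
    f0 n s ≤ f0 n t := by
  unfold f0
  have hf : (0:ℝ) < (Nat.factorial (n-1) : ℝ) := Nat.cast_pos.2 (Nat.factorial_pos _)
  have hX : (n:ℝ) * s - n * Real.exp s ≤ (n:ℝ) * t - n * Real.exp t := by
    have hn0 : (0:ℝ) ≤ n := Nat.cast_nonneg n
    nlinarith
  exact (div_le_div_iff_of_pos_right hf).2
    (mul_le_mul_of_nonneg_left (Real.exp_le_exp.2 hX) (by positivity))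

lemma f0_mono (n : ℕ) {s t : ℝ} (hst : s ≤ t) (ht : t ≤ 0) : f0 n s ≤ f0 n t := by
  apply f0_le_f0
  have h4 : Real.exp (s-t) * Real.exp t = Real.exp s := by rw [← Real.exp_add]; ring_nf
  nlinarith [mul_le_mul_of_nonneg_right (Real.add_one_le_exp (s-t)) (Real.exp_pos t).le,
    mul_nonneg (by linarith : (0:ℝ) ≤ t - s)
      (by linarith [Real.exp_le_one_iff.2 ht] : (0:ℝ) ≤ 1 - Real.exp t)]

lemma f0_anti (n : ℕ) {s t : ℝ} (hs : 0 ≤ s) (hst : s ≤ t) : f0 n t ≤ f0 n s := by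
  apply f0_le_f0
  have h4 : Real.exp (t-s) * Real.exp s = Real.exp t := by rw [← Real.exp_add]; ring_nf
  nlinarith [mul_le_mul_of_nonneg_right (Real.add_one_le_exp (t-s)) (Real.exp_pos s).le,
    mul_nonneg (by linarith : (0:ℝ) ≤ t - s)
      (by linarith [Real.one_le_exp hs] : (0:ℝ) ≤ Real.exp s - 1)]

lemma stirling_lb {n : ℕ} (hn : 0 < n) :
    Real.sqrt π ≤ Stirling.stirlingSeq n := by
  obtain ⟨m, rfl⟩ := Nat.exists_eq_add_of_lt hn
  simp only [zero_add]
  have h := Stirling.stirlingSeq'_antitone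
  have hlim : Filter.Tendsto (Stirling.stirlingSeq ∘ Nat.succ) Filter.atTop (nhds (Real.sqrt π)) := by
    have := Stirling.tendsto_stirlingSeq_sqrt_pi.comp (Filter.tendsto_add_atTop_nat 1)
    convert this using 2
  exact h.le_of_tendsto hlim m

lemma f0_le {n : ℕ} (hn : 0 < n) (t : ℝ) :
    f0 n t ≤ Real.sqrt ((n : ℝ) / (2 * π)) := by
  have hnn : (0:ℝ) < n := Nat.cast_pos.2 hn
  have h1 : f0 n t ≤ (n:ℝ)^n * Real.exp (-(n:ℝ)) / (Nat.factorial (n-1) : ℝ) := by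
    unfold f0
    have : (n:ℝ) * t - n * Real.exp t ≤ -(n:ℝ) := by
      have := Real.add_one_le_exp t
      nlinarith
    have := Real.exp_le_exp.2 this
    have hf : (0:ℝ) < (Nat.factorial (n-1) : ℝ) := Nat.cast_pos.2 (Nat.factorial_pos _)
    gcongr
  refine h1.trans ?_
  -- Stirling: n! ≥ √π * √(2n) * (n/e)^n
  have hs := stirling_lb hn
  rw [Stirling.stirlingSeq] at hs
  have hden : (0:ℝ) < Real.sqrt (2*n) * ((n:ℝ)/Real.exp 1)^n := by positivity
  have hfact : Real.sqrt π * (Real.sqrt (2*n) * ((n:ℝ)/Real.exp 1)^n) ≤ (Nat.factorial n : ℝ) := by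
    rw [le_div_iff₀ hden] at hs; linarith
  -- n! = n * (n-1)!
  have hnf : (Nat.factorial n : ℝ) = (n:ℝ) * (Nat.factorial (n-1) : ℝ) := by
    conv_lhs => rw [show n = (n-1)+1 from (Nat.succ_pred_eq_of_pos hn).symm]
    rw [Nat.factorial_succ]
    push_cast [Nat.succ_pred_eq_of_pos hn]
    rw [Nat.cast_sub hn]
    push_cast; ring
  have hfpos : (0:ℝ) < (Nat.factorial (n-1) : ℝ) := Nat.cast_pos.2 (Nat.factorial_pos _)
  rw [div_le_iff₀ hfpos]
  -- goal: n^n * exp(-n) ≤ √(n/(2π)) * (n-1)!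
  have key : ((n:ℝ)/Real.exp 1)^n = (n:ℝ)^n * Real.exp (-(n:ℝ)) := by
    rw [div_pow, ← Real.exp_nat_mul, mul_one, Real.exp_neg, div_eq_mul_inv]
  have h2 : Real.sqrt π * Real.sqrt (2*n) * ((n:ℝ)^n * Real.exp (-(n:ℝ)))
      ≤ (n:ℝ) * (Nat.factorial (n-1):ℝ) := by
    rw [← hnf, ← key]; nlinarith [hfact]
  have hsqrt : Real.sqrt ((n:ℝ)/(2*π)) * (Real.sqrt π * Real.sqrt (2*n)) = (n:ℝ) := by
    rw [← Real.sqrt_mul (by positivity), ← Real.sqrt_mul (by positivity)]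
    rw [show (n:ℝ)/(2*π) * (π * (2*n)) = (n:ℝ)^2 by field_simp]
    exact Real.sqrt_sq hnn.le
  have hsp : (0:ℝ) < Real.sqrt π * Real.sqrt (2*n) := by positivity
  nlinarith [Real.exp_pos (-(n:ℝ)), pow_pos hnn n, Real.sqrt_nonneg ((n:ℝ)/(2*π))]

noncomputable def h0 (n : ℕ) (x : ℝ) : ℝ :=
  (n : ℝ) ^ n / (Nat.factorial (n - 1) : ℝ) * (x ^ ((n : ℝ) - 1) * Real.exp (-((n:ℝ) * x)))

lemma h0_integrable {n : ℕ} (hn : 0 < n) : IntegrableOn (h0 n) (Ioi 0) := by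
  have hb : IntegrableOn (fun x : ℝ => Real.exp (-x) * x ^ ((n:ℝ) - 1)) (Ioi 0) :=
    Real.GammaIntegral_convergent (by exact_mod_cast hn)
  have hnn : (0:ℝ) < n := Nat.cast_pos.2 hn
  have h1 : IntegrableOn (fun x : ℝ => Real.exp (-((n:ℝ)*x)) * ((n:ℝ)*x) ^ ((n:ℝ) - 1)) (Ioi 0) := by
    have := (integrableOn_Ioi_comp_mul_left_iff
      (fun x : ℝ => Real.exp (-x) * x ^ ((n:ℝ) - 1)) 0 hnn).2 (by simpa using hb)
    simpa using this
  have h2 : IntegrableOn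
      (fun x : ℝ => ((n:ℝ) ^ ((n:ℝ)-1)) • (Real.exp (-((n:ℝ)*x)) * x ^ ((n:ℝ) - 1))) (Ioi 0) := by
    apply (h1.congr_fun ?_ measurableSet_Ioi)
    intro x hx
    simp only [smul_eq_mul]
    rw [Real.mul_rpow hnn.le (le_of_lt hx)]
    ring
  have h3 : IntegrableOn (fun x : ℝ =>
      ((n : ℝ) ^ n / (Nat.factorial (n - 1) : ℝ) / ((n:ℝ) ^ ((n:ℝ)-1))) *
        (((n:ℝ) ^ ((n:ℝ)-1)) * (Real.exp (-((n:ℝ)*x)) * x ^ ((n:ℝ) - 1)))) (Ioi 0) := by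
    have := h2.smul ((n : ℝ) ^ n / (Nat.factorial (n - 1) : ℝ) / ((n:ℝ) ^ ((n:ℝ)-1)))
    simp only [smul_eq_mul, Function.comp, Pi.smul_def] at this; exact this
  apply IntegrableOn.congr_fun h3 ?_ measurableSet_Ioi
  intro x hx
  have hpow : ((n:ℝ) ^ ((n:ℝ)-1)) ≠ 0 := by positivity
  unfold h0
  field_simp

lemma h0_integral {n : ℕ} (hn : 0 < n) : ∫ x in Ioi 0, h0 n x = 1 := by
  have hnn : (0:ℝ) < n := Nat.cast_pos.2 hn
  unfold h0
  rw [integral_const_mul, integral_rpow_mul_exp_neg_mul_Ioi (by exact_mod_cast hn) hnn]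
  rw [show Real.Gamma (n:ℝ) = (Nat.factorial (n-1) : ℝ) by
    rw [show (n:ℝ) = ((n-1:ℕ):ℝ) + 1 by
      rw [Nat.cast_sub hn]; push_cast; ring]
    exact Real.Gamma_nat_eq_factorial (n-1)]
  have hfp : (0:ℝ) < (Nat.factorial (n-1) : ℝ) := Nat.cast_pos.2 (Nat.factorial_pos _)
  rw [Real.rpow_natCast, div_pow, one_pow]
  field_simp

lemma exp_smul_h0 (n : ℕ) (u : ℝ) : |Real.exp u| • h0 n (Real.exp u) = f0 n u := by
  unfold h0 f0
  rw [abs_of_pos (Real.exp_pos u), smul_eq_mul,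
    Real.rpow_def_of_pos (Real.exp_pos u), Real.log_exp, ← Real.exp_add]
  rw [mul_comm (Real.exp u), mul_assoc, ← Real.exp_add, div_mul_eq_mul_div]
  congr 2
  ring

lemma cov_exp (n : ℕ) (g : ℝ → ℝ) :
    ∫ x in Ioi (0:ℝ), g x = ∫ u, |Real.exp u| • g (Real.exp u) := by
  rw [← Real.range_exp, ← image_univ,
    integral_image_eq_integral_abs_deriv_smul MeasurableSet.univ
      (fun x _ => (Real.hasDerivAt_exp x).hasDerivWithinAt) Real.exp_injective.injOn g,
    setIntegral_univ]

lemma f0_integrable {n : ℕ} (hn : 0 < n) : Integrable (f0 n) := by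
  have := (integrableOn_image_iff_integrableOn_abs_deriv_smul MeasurableSet.univ
      (fun x (_ : x ∈ (univ : Set ℝ)) => (Real.hasDerivAt_exp x).hasDerivWithinAt)
      Real.exp_injective.injOn (h0 n)).1
  rw [image_univ, Real.range_exp] at this
  have h2 := this (h0_integrable hn)
  rw [integrableOn_univ] at h2
  exact h2.congr (Filter.Eventually.of_forall fun u => exp_smul_h0 n u)

lemma f0_integral {n : ℕ} (hn : 0 < n) : ∫ u, f0 n u = 1 := by
  rw [← h0_integral hn, cov_exp n (h0 n)]
  exact integral_congr_ae (Filter.Eventually.of_forall fun u => (exp_smul_h0 n u).symm)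

lemma f0_shift_Iic {n : ℕ} (a : ℝ) :
    ∫ u in Iic a, f0 n (u - a) = ∫ u in Iic 0, f0 n u := by
  have h := (measurePreserving_sub_right (volume : Measure ℝ) a).setIntegral_preimage_emb
    (MeasurableEquiv.subRight a).measurableEmbedding (f0 n) (Iic 0)
  rw [show (fun u : ℝ => u - a) ⁻¹' (Iic 0) = Iic a by
    ext u; simp [sub_nonpos]] at h
  exact h

lemma f0_shift_Ioi {n : ℕ} (a : ℝ) :
    ∫ u in Ioi a, f0 n (u - a) = ∫ u in Ioi 0, f0 n u := by
  have h := (measurePreserving_sub_right (volume : Measure ℝ) a).setIntegral_preimage_emb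
    (MeasurableEquiv.subRight a).measurableEmbedding (f0 n) (Ioi 0)
  rw [show (fun u : ℝ => u - a) ⁻¹' (Ioi 0) = Ioi a by
    ext u; simp [sub_pos]] at h
  exact h

lemma f0_tails {n : ℕ} (hn : 0 < n) :
    (∫ u in Iic 0, f0 n u) + ∫ u in Ioi (0:ℝ), f0 n u = 1 := by
  rw [← f0_integral hn]
  exact intervalIntegral.integral_Iic_add_Ioi (f0_integrable hn).integrableOn (f0_integrable hn).integrableOn

/-- For any `M` codewords `c₁ ≤ … ≤ c_M` in `[0,∞)` with average power at most `ρ`,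
and any (in particular the maximum-likelihood) decoder with disjoint measurable
decoding sets `D j`, the average probability of successful decoding satisfies
`1 - ε' ≤ (1/M)(1 + √(n/(2π)) ln(1+Mρ))`. -/
theorem success_probability_upper_bound (n M : ℕ) (hn : 0 < n) (hM : 1 ≤ M)
    (ρ : ℝ) (hρ : 0 < ρ)
    (c : Fin M → ℝ) (hc0 : ∀ j, 0 ≤ c j) (hmono : Monotone c)
    (hpow : (1 / (M : ℝ)) * ∑ j, c j ≤ ρ)
    (D : Fin M → Set ℝ) (hDm : ∀ j, MeasurableSet (D j))
    (hdisj : Pairwise (Function.onFun Disjoint D)) :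
    (1 / (M : ℝ)) * ∑ j, ∫ u in D j, outDensity n (c j) u ≤
      (1 / (M : ℝ)) * (1 + Real.sqrt ((n : ℝ) / (2 * Real.pi)) *
        Real.log (1 + M * ρ)) := by
  have hM0 : (0:ℝ) < M := by exact_mod_cast hM
  set B := Real.sqrt ((n : ℝ) / (2 * Real.pi)) with hBdef
  have hB : 0 ≤ B := Real.sqrt_nonneg _
  set L : Fin M → ℝ := fun j => Real.log (1 + c j) with hLdef
  have hL0 : ∀ j, 0 ≤ L j := fun j => Real.log_nonneg (by linarith [hc0 j])
  have hLmono : Monotone L := fun i j hij =>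
    Real.log_le_log (by linarith [hc0 i]) (by linarith [hmono hij])
  set j0 : Fin M := ⟨0, hM⟩ with hj0
  set j1 : Fin M := ⟨M-1, by omega⟩ with hj1
  set a : ℝ := L j0 with ha
  set b : ℝ := L j1 with hbdef
  have hjle : ∀ j : Fin M, j0 ≤ j ∧ j ≤ j1 := fun j =>
    ⟨Fin.mk_le_of_le_val (Nat.zero_le _), by
      rw [Fin.le_def]; exact Nat.le_pred_of_lt j.isLt⟩
  have haj : ∀ j, a ≤ L j := fun j => hLmono (hjle j).1
  have hjb : ∀ j, L j ≤ b := fun j => hLmono (hjle j).2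
  have hab : a ≤ b := (haj j1)
  have hsum : ∑ j, c j ≤ M * ρ := by
    have := mul_le_mul_of_nonneg_left hpow hM0.le
    rw [← mul_assoc, mul_one_div, div_self hM0.ne', one_mul] at this
    exact this
  have hcb : c j1 ≤ M * ρ :=
    le_trans (Finset.single_le_sum (fun i _ => hc0 i) (Finset.mem_univ j1)) hsum
  have hblog : b ≤ Real.log (1 + M * ρ) :=
    Real.log_le_log (by linarith [hc0 j1]) (by linarith)
  have hba : b - a ≤ Real.log (1 + M * ρ) := by
    have := hL0 j0; linarith
  -- rewrite densities
  have hrw : ∀ j : Fin M, (∫ u in D j, outDensity n (c j) u) =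
      ∫ u in D j, f0 n (u - L j) := by
    intro j
    exact integral_congr_ae (Filter.Eventually.of_forall fun u => outDensity_eq n (hc0 j) u)
  rw [Finset.sum_congr rfl (fun j _ => hrw j)]
  -- integrability of shifted densities
  have hgint : ∀ j : Fin M, Integrable (fun u : ℝ => f0 n (u - L j)) :=
    fun j => (f0_integrable hn).comp_sub_right (L j)
  -- the three pieces
  set E1 : Fin M → Set ℝ := fun j => D j ∩ Iic a with hE1
  set E2 : Fin M → Set ℝ := fun j => D j ∩ Ioc a b with hE2
  set E3 : Fin M → Set ℝ := fun j => D j ∩ Ioi b with hE3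
  have hE1m : ∀ j, MeasurableSet (E1 j) := fun j => (hDm j).inter measurableSet_Iic
  have hE2m : ∀ j, MeasurableSet (E2 j) := fun j => (hDm j).inter measurableSet_Ioc
  have hE3m : ∀ j, MeasurableSet (E3 j) := fun j => (hDm j).inter measurableSet_Ioi
  have hsplit : ∀ j : Fin M, (∫ u in D j, f0 n (u - L j)) =
      (∫ u in E1 j, f0 n (u - L j)) + (∫ u in E2 j, f0 n (u - L j))
        + ∫ u in E3 j, f0 n (u - L j) := by
    intro j
    have hDeq : D j = (E1 j ∪ E2 j) ∪ E3 j := by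
      rw [hE1, hE2, hE3]
      simp only [← inter_union_distrib_left]
      rw [Iic_union_Ioc_eq_Iic hab, Iic_union_Ioi]
      exact (inter_univ _).symm
    have hd12 : Disjoint (E1 j) (E2 j) :=
      (Iic_disjoint_Ioc le_rfl).mono inter_subset_right inter_subset_right
    have hd123 : Disjoint (E1 j ∪ E2 j) (E3 j) := by
      refine Disjoint.mono ?_ inter_subset_right (Iic_disjoint_Ioi (le_refl b))
      exact union_subset (inter_subset_right.trans (Iic_subset_Iic.2 hab))
        (inter_subset_right.trans Ioc_subset_Iic_self)
    rw [hDeq, setIntegral_union hd123 (hE3m j) ((hgint j).integrableOn) ((hgint j).integrableOn),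
      setIntegral_union hd12 (hE2m j) ((hgint j).integrableOn) ((hgint j).integrableOn)]
  rw [Finset.sum_congr rfl (fun j _ => hsplit j), Finset.sum_add_distrib,
    Finset.sum_add_distrib]
  -- tail sums
  have hsum_tail : ∀ (S : Fin M → Set ℝ) (T : Set ℝ), (∀ j, MeasurableSet (S j)) →
      (∀ j, S j ⊆ T) → Pairwise (Function.onFun Disjoint S) → MeasurableSet T →
      ∀ g : ℝ → ℝ, Integrable g → (∀ u, 0 ≤ g u) →
      ∑ j, ∫ u in S j, g u ≤ ∫ u in T, g u := by
    intro S T hSm hST hSd hTm g hg hg0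
    have hiu : (∫ u in ⋃ j, S j, g u) = ∑' j, ∫ u in S j, g u :=
      integral_iUnion hSm hSd hg.integrableOn
    rw [tsum_fintype] at hiu
    rw [← hiu]
    exact setIntegral_mono_set hg.integrableOn
      (Filter.Eventually.of_forall fun u => hg0 u)
      (HasSubset.Subset.eventuallyLE (iUnion_subset hST))
  have hS1 : ∑ j, ∫ u in E1 j, f0 n (u - L j) ≤ ∫ u in Iic 0, f0 n u := by
    have step1 : ∀ j : Fin M, (∫ u in E1 j, f0 n (u - L j)) ≤ ∫ u in E1 j, f0 n (u - a) := by
      intro j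
      refine setIntegral_mono_on ((hgint j).integrableOn)
        (((f0_integrable hn).comp_sub_right a).integrableOn) (hE1m j) ?_
      intro u hu
      exact f0_mono n (by linarith [haj j]) (by
        have : u ≤ a := hu.2
        linarith)
    calc ∑ j, ∫ u in E1 j, f0 n (u - L j) ≤ ∑ j, ∫ u in E1 j, f0 n (u - a) :=
          Finset.sum_le_sum fun j _ => step1 j
      _ ≤ ∫ u in Iic a, f0 n (u - a) := by
          refine hsum_tail E1 (Iic a) hE1m (fun j => inter_subset_right) ?_ measurableSet_Iic
            _ ((f0_integrable hn).comp_sub_right a) (fun u => f0_nonneg n _)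
          exact fun i j hij => (hdisj hij).mono inter_subset_left inter_subset_left
      _ = ∫ u in Iic 0, f0 n u := f0_shift_Iic a
  have hS3 : ∑ j, ∫ u in E3 j, f0 n (u - L j) ≤ ∫ u in Ioi (0:ℝ), f0 n u := by
    have step1 : ∀ j : Fin M, (∫ u in E3 j, f0 n (u - L j)) ≤ ∫ u in E3 j, f0 n (u - b) := by
      intro j
      refine setIntegral_mono_on ((hgint j).integrableOn)
        (((f0_integrable hn).comp_sub_right b).integrableOn) (hE3m j) ?_
      intro u hu
      have hub : b < u := hu.2
      exact f0_anti n (by linarith) (by linarith [hjb j])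
    calc ∑ j, ∫ u in E3 j, f0 n (u - L j) ≤ ∑ j, ∫ u in E3 j, f0 n (u - b) :=
          Finset.sum_le_sum fun j _ => step1 j
      _ ≤ ∫ u in Ioi b, f0 n (u - b) := by
          refine hsum_tail E3 (Ioi b) hE3m (fun j => inter_subset_right) ?_ measurableSet_Ioi
            _ ((f0_integrable hn).comp_sub_right b) (fun u => f0_nonneg n _)
          exact fun i j hij => (hdisj hij).mono inter_subset_left inter_subset_left
      _ = ∫ u in Ioi (0:ℝ), f0 n u := f0_shift_Ioi b
  have hS2 : ∑ j, ∫ u in E2 j, f0 n (u - L j) ≤ B * Real.log (1 + M * ρ) := by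
    have hfin : ∀ j, volume (E2 j) < ⊤ :=
      fun j => lt_of_le_of_lt (measure_mono inter_subset_right) measure_Ioc_lt_top
    have step1 : ∀ j : Fin M, (∫ u in E2 j, f0 n (u - L j)) ≤ B * (volume (E2 j)).toReal := by
      intro j
      have := norm_setIntegral_le_of_norm_le_const (hfin j)
        (C := B) (f := fun u : ℝ => f0 n (u - L j)) ?_
      · exact (le_abs_self _).trans this
      · intro x _
        rw [Real.norm_eq_abs, abs_of_nonneg (f0_nonneg n _)]
        exact f0_le hn _
    have hvol : ∑ j, (volume (E2 j)).toReal ≤ Real.log (1 + M * ρ) := by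
      have hdisj2 : Pairwise (Function.onFun Disjoint E2) :=
        fun i j hij => (hdisj hij).mono inter_subset_left inter_subset_left
      have h1 : ∑' j, volume (E2 j) = volume (⋃ j, E2 j) :=
        (measure_iUnion hdisj2 hE2m).symm
      rw [tsum_fintype] at h1
      have h2 : volume (⋃ j, E2 j) ≤ ENNReal.ofReal (b - a) := by
        rw [← Real.volume_Ioc]
        exact measure_mono (iUnion_subset fun j => inter_subset_right)
      have h3 : (∑ j, volume (E2 j)).toReal ≤ b - a := by
        rw [h1]
        calc (volume (⋃ j, E2 j)).toReal ≤ (ENNReal.ofReal (b-a)).toReal :=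
              ENNReal.toReal_mono ENNReal.ofReal_ne_top h2
          _ = b - a := ENNReal.toReal_ofReal (by linarith)
      rw [← ENNReal.toReal_sum (fun j _ => (hfin j).ne)] at *
      linarith
    calc ∑ j, ∫ u in E2 j, f0 n (u - L j) ≤ ∑ j, B * (volume (E2 j)).toReal :=
          Finset.sum_le_sum fun j _ => step1 j
      _ = B * ∑ j, (volume (E2 j)).toReal := by rw [Finset.mul_sum]
      _ ≤ B * Real.log (1 + M * ρ) := mul_le_mul_of_nonneg_left hvol hB
  have htot : (∑ j, ∫ u in E1 j, f0 n (u - L j)) + (∑ j, ∫ u in E2 j, f0 n (u - L j))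
      + ∑ j, ∫ u in E3 j, f0 n (u - L j) ≤ 1 + B * Real.log (1 + M * ρ) := by
    have := f0_tails hn
    linarith
  exact mul_le_mul_of_nonneg_left htot (by positivity)
end

section
/- Let G be a nonnegative random variable, k, ρ > 0, g_th and p* as in the truncated channel inversion policy (P*(Π = 1/(kg)|G=g) = p*(g), P*(Π=0|G=g) = 1−p*(g)). Suppose P_{Π|G} is any conditional distribution with Ê := E[max(1−kΠG,0)] strictly smaller than ε* := P[G < g_th] + (1−p*(g_th))·P[G = g_th]. Then E[Π] > ρ, i.e., the long-term power constraint is violated; in fact E[Π] − ρ ≥ (ε* − Ê)/(k·g_th) > 0. -/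
open MeasureTheory

/-- If a power policy `Π` achieves `E[max(1-kΠG,0)]` strictly smaller than the
value `ε* = P[G < g_th] + (1 - p*(g_th)) P[G = g_th]` attained by truncated
channel inversion, then it must violate the long-term power constraint:
`E[Π] - ρ ≥ (ε* - Ê)/(k g_th) > 0`. -/
theorem power_constraint_violated {Ω : Type*} [MeasurableSpace Ω]
    (P : Measure Ω) [IsProbabilityMeasure P]
    (G Pi : Ω → ℝ) (hGm : Measurable G) (hPm : Measurable Pi)
    (hG0 : ∀ ω, 0 ≤ G ω) (hP0 : ∀ ω, 0 ≤ Pi ω) (hPint : Integrable Pi P)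
    (k ρ : ℝ) (hk : 0 < k) (hρ : 0 < ρ)
    (gth : ℝ)
    (hgth : gth = sInf {t : ℝ | 0 < t ∧
      (∫ ω, (if t ≤ G ω then 1 / (k * G ω) else 0) ∂P) ≤ ρ})
    (hgth_pos : 0 < gth)
    (pstar : ℝ)
    -- `p*(g_th)` is chosen so that truncated channel inversion meets the
    -- power budget with equality: `E[Π*] = ρ`
    (hpstar : ρ * k = (∫ ω, (if gth < G ω then (G ω)⁻¹ else 0) ∂P) +
      pstar * (P {ω | G ω = gth}).toReal / gth)
    (εstar εhat : ℝ)
    (hεstar : εstar = (P {ω | G ω < gth}).toReal +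
      (1 - pstar) * (P {ω | G ω = gth}).toReal)
    (hεhat : εhat = ∫ ω, max (1 - k * Pi ω * G ω) 0 ∂P)
    (hlt : εhat < εstar) :
    (∫ ω, Pi ω ∂P) - ρ ≥ (εstar - εhat) / (k * gth) ∧ ρ < ∫ ω, Pi ω ∂P := by
  have hkg : 0 < k * gth := mul_pos hk hgth_pos
  have hsLt : MeasurableSet {ω | G ω < gth} := measurableSet_lt hGm measurable_const
  have hsEq : MeasurableSet {ω | G ω = gth} := hGm (measurableSet_singleton gth)
  have hsLe : MeasurableSet {ω | G ω ≤ gth} := measurableSet_le hGm measurable_const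
  have hsGt : MeasurableSet {ω | gth < G ω} := measurableSet_lt measurable_const hGm
  have hmeasA : Measurable fun ω => (if gth < G ω then (G ω)⁻¹ else 0) :=
    Measurable.ite hsGt hGm.inv measurable_const
  have hintA : Integrable (fun ω => (if gth < G ω then (G ω)⁻¹ else 0)) P := by
    refine (integrable_const gth⁻¹).mono' hmeasA.aestronglyMeasurable (ae_of_all _ fun ω => ?_)
    by_cases h : gth < G ω
    · simp only [h, if_true, Real.norm_eq_abs]
      rw [abs_of_nonneg (inv_nonneg.2 (hG0 ω))]
      exact inv_anti₀ hgth_pos h.le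
    · simp [h, inv_nonneg.2 hgth_pos.le]
  have hmeasF : Measurable fun ω => max (1 - k * Pi ω * G ω) 0 :=
    (measurable_const.sub ((measurable_const.mul hPm).mul hGm)).max measurable_const
  have hintF : Integrable (fun ω => max (1 - k * Pi ω * G ω) 0) P := by
    refine (integrable_const (1:ℝ)).mono' hmeasF.aestronglyMeasurable (ae_of_all _ fun ω => ?_)
    have h1 : max (1 - k * Pi ω * G ω) 0 ≤ 1 := by
      apply max_le _ zero_le_one
      nlinarith [mul_nonneg (mul_nonneg hk.le (hP0 ω)) (hG0 ω)]
    rw [Real.norm_eq_abs, abs_of_nonneg (le_max_right _ _)]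
    exact h1
  -- pointwise key inequality
  have key : ∀ ω, gth * (if gth < G ω then (G ω)⁻¹ else 0)
      + Set.indicator {ω | G ω ≤ gth} (fun _ => (1:ℝ)) ω
      ≤ k * gth * Pi ω + max (1 - k * Pi ω * G ω) 0 := by
    intro ω
    have m0 : (0:ℝ) ≤ max (1 - k * Pi ω * G ω) 0 := le_max_right _ _
    have m1 : 1 - k * Pi ω * G ω ≤ max (1 - k * Pi ω * G ω) 0 := le_max_left _ _
    by_cases h : gth < G ω
    · have hGpos : 0 < G ω := hgth_pos.trans h
      have hinv : G ω * (G ω)⁻¹ = 1 := mul_inv_cancel₀ hGpos.ne'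
      rw [if_pos h, Set.indicator_apply, if_neg (by simpa using not_le.2 h)]
      rcases le_or_gt (1 : ℝ) (k * Pi ω * G ω) with h1 | h1
      · have h2 := mul_le_mul_of_nonneg_right h1
          (mul_nonneg hgth_pos.le (inv_nonneg.2 hGpos.le))
        have h3 : gth * (G ω)⁻¹ ≤ k * gth * Pi ω := by
          calc gth * (G ω)⁻¹ = 1 * (gth * (G ω)⁻¹) := by ring
          _ ≤ (k * Pi ω * G ω) * (gth * (G ω)⁻¹) := h2
          _ = (k * gth * Pi ω) * (G ω * (G ω)⁻¹) := by ring
          _ = k * gth * Pi ω := by rw [hinv, mul_one]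
        linarith
      · have hgg : gth * (G ω)⁻¹ ≤ 1 := by
          calc gth * (G ω)⁻¹ ≤ G ω * (G ω)⁻¹ :=
            mul_le_mul_of_nonneg_right h.le (inv_nonneg.2 hGpos.le)
          _ = 1 := hinv
        have prod : 0 ≤ (1 - k * Pi ω * G ω) * (1 - gth * (G ω)⁻¹) :=
          mul_nonneg (by linarith) (by linarith)
        have expand : (1 - k * Pi ω * G ω) * (1 - gth * (G ω)⁻¹)
            = 1 - gth * (G ω)⁻¹ - k * Pi ω * G ω + k * gth * Pi ω * (G ω * (G ω)⁻¹) := by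
          ring
        rw [expand, hinv, mul_one] at prod
        linarith
    · rw [if_neg h, Set.indicator_apply, if_pos (by simpa using not_lt.1 h)]
      push_neg at h
      nlinarith [mul_nonneg hk.le (hP0 ω)]
  have hLHSint : Integrable (fun ω => gth * (if gth < G ω then (G ω)⁻¹ else 0)
      + Set.indicator {ω | G ω ≤ gth} (fun _ => (1:ℝ)) ω) P :=
    (hintA.const_mul gth).add ((integrable_const 1).indicator hsLe)
  have hRHSint : Integrable (fun ω => k * gth * Pi ω + max (1 - k * Pi ω * G ω) 0) P :=
    (hPint.const_mul (k * gth)).add hintF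
  have hmono := integral_mono hLHSint hRHSint key
  rw [integral_add (hintA.const_mul gth) ((integrable_const 1).indicator hsLe),
    integral_add (hPint.const_mul (k * gth)) hintF,
    integral_const_mul, integral_const_mul,
    integral_indicator_const (1:ℝ) hsLe] at hmono
  have hsplit : (P {ω | G ω ≤ gth}).toReal
      = (P {ω | G ω < gth}).toReal + (P {ω | G ω = gth}).toReal := by
    have hu : {ω | G ω ≤ gth} = {ω | G ω < gth} ∪ {ω | G ω = gth} := by
      ext ω; simp [le_iff_lt_or_eq]
    have hd : Disjoint {ω | G ω < gth} {ω | G ω = gth} :=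
      Set.disjoint_left.2 fun ω h1 h2 => absurd h2 (ne_of_lt h1)
    rw [hu, measure_union hd hsEq,
      ENNReal.toReal_add (measure_ne_top P _) (measure_ne_top P _)]
  rw [measureReal_def, hsplit] at hmono
  simp only [smul_eq_mul, mul_one] at hmono
  have hpstar' : ρ * k * gth
      = gth * (∫ ω, (if gth < G ω then (G ω)⁻¹ else 0) ∂P)
        + pstar * (P {ω | G ω = gth}).toReal := by
    field_simp [hgth_pos.ne'] at hpstar ⊢
    linarith
  have hmain : εstar - εhat ≤ ((∫ ω, Pi ω ∂P) - ρ) * (k * gth) := by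
    rw [hεstar, hεhat]
    nlinarith [hmono, hpstar']
  have h1 : (εstar - εhat) / (k * gth) ≤ (∫ ω, Pi ω ∂P) - ρ :=
    (div_le_iff₀ hkg).2 hmain
  have h2 : 0 < (εstar - εhat) / (k * gth) := div_pos (by linarith) hkg
  exact ⟨h1, by linarith⟩
end
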